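/- For each fixed j ∈ {1, …, n+1}, let A_n^j[𝟙] denote the matrix obtained from A_n by replacing its j-th column by the column vector all of whose entries equal 1. Then det A_n^j[𝟙] = (R^n/r_{j−1})·Cof_{1,j}[A_n]. -/

import Mathlib

open Finset Matrix

/-- The (i,j) cofactor of a square matrix: (−1)^(i+j) times the determinant of the
submatrix obtained by deleting row `i` and column `j`. -/
noncomputable def cof {n : ℕ} (M : Matrix (Fin (n + 1)) (Fin (n + 1)) ℝ)
    (i j : Fin (n + 1)) : ℝ :=
  (-1 : ℝ) ^ ((i : ℕ) + (j : ℕ)) * (M.submatrix i.succAbove j.succAbove).det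

theorem stmt2 (n : ℕ) (hn : 1 ≤ n) (β r : ℕ → ℝ)
    (hr0 : 0 < r 0)
    (hinter : ∀ k, 1 ≤ k → k ≤ n → r (k - 1) < β k ∧ β k < r k)
    (A : Matrix (Fin (n + 1)) (Fin (n + 1)) ℝ)
    (hA : ∀ i j : Fin (n + 1), A i j = if (i : ℕ) = 0 then 1 else β i / (β i - r j))
    (R : ℝ)
    (hR : R = (∏ k ∈ Finset.range (n + 1), r k) / ∏ k ∈ Finset.Icc 1 n, β k) :
    ∀ j : Fin (n + 1),
      (A.updateCol j (fun _ => (1 : ℝ))).det = (R / r j) * cof A 0 j := by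
  -- monotonicity of r
  have hstep : ∀ b, b + 1 ≤ n → r b < r (b + 1) := by
    intro b hb
    obtain ⟨h1, h2⟩ := hinter (b + 1) (by omega) hb
    simpa using h1.trans h2
  have hrmono : ∀ b, b ≤ n → ∀ a, a ≤ b → r a ≤ r b := by
    intro b
    induction b with
    | zero => intro _ a ha; interval_cases a; exact le_rfl
    | succ m ih =>
      intro hm a ha
      rcases eq_or_lt_of_le ha with h | h
      · rw [h]
      · exact (ih (by omega) a (by omega)).trans (hstep m hm).le
  have hrpos : ∀ k, k ≤ n → 0 < r k := fun k hk =>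
    lt_of_lt_of_le hr0 (hrmono k hk 0 (Nat.zero_le _))
  have hβpos : ∀ k, 1 ≤ k → k ≤ n → 0 < β k := by
    intro k h1 h2
    have := (hinter k h1 h2).1
    have h0 : 0 < r (k - 1) := hrpos _ (by omega)
    linarith
  have hne : ∀ i k, 1 ≤ i → i ≤ n → k ≤ n → β i ≠ r k := by
    intro i k h1 h2 h3
    rcases lt_or_ge k i with h | h
    · have hk1 : r k ≤ r (i - 1) := hrmono (i - 1) (by omega) k (by omega)
      have := (hinter i h1 h2).1
      exact (lt_of_le_of_lt hk1 this).ne'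
    · have := (hinter i h1 h2).2
      have hk1 : r i ≤ r k := hrmono k h3 i h
      exact (lt_of_lt_of_le this hk1).ne
  intro j
  have hjn : (j : ℕ) ≤ n := by omega
  set B := A.updateCol j (fun _ => (1 : ℝ)) with hB
  set B' : Matrix (Fin (n + 1)) (Fin (n + 1)) ℝ :=
    fun i k => if k = j then 1 else if (i : ℕ) = 0 then 0
      else r (k : ℕ) * (β (i : ℕ) - r (k : ℕ))⁻¹ with hB'
  set C : Matrix (Fin n) (Fin n) ℝ :=
    fun i k => (β ((i : ℕ) + 1) - r ((j.succAbove k : ℕ)))⁻¹ with hC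
  -- Step A : det B = det B'
  have hdetBB' : B.det = B'.det := by
    rw [← det_transpose B, ← det_transpose B']
    apply det_eq_of_forall_row_eq_smul_add_const (fun k => if k = j then 0 else 1) j
      (if_pos rfl)
    intro k i
    simp only [transpose_apply]
    by_cases hkj : k = j
    · subst hkj
      simp [hB, hB', Matrix.updateCol_apply]
    · have hBik : B i k = A i k := by
        simp [hB, Matrix.updateCol_apply, hkj]
      rw [hBik, hA]
      have hik : (i : ℕ) < n + 1 := i.isLt
      have hkk : (k : ℕ) < n + 1 := k.isLt
      by_cases hi0 : (i : ℕ) = 0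
      · have hi0' : i = 0 := Fin.ext hi0
        simp [hB', hi0, hi0', hkj]
      · have hne' : β (i : ℕ) - r (k : ℕ) ≠ 0 :=
          sub_ne_zero.mpr (hne (i : ℕ) (k : ℕ) (by omega) (by omega) (by omega))
        simp only [hB', if_neg hkj, if_neg hi0, if_pos rfl, if_pos]
        field_simp
        ring
  -- Step B : Laplace expansion of B' along row 0
  have hdetB' : B'.det = (-1 : ℝ) ^ (j : ℕ) *
      (B'.submatrix Fin.succ j.succAbove).det := by
    rw [det_succ_row_zero, Finset.sum_eq_single j]
    · simp [hB']
    · intro k _ hkj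
      simp [hB', hkj]
    · simp
  -- Step C : factor r's out of the submatrix of B'
  have hsubB' : (B'.submatrix Fin.succ j.succAbove).det =
      (∏ k : Fin n, r ((j.succAbove k : ℕ))) * C.det := by
    have hEq : B'.submatrix Fin.succ j.succAbove =
        Matrix.of (fun i k => r ((j.succAbove k : ℕ)) * C i k) := by
      ext i k
      have h1 : j.succAbove k ≠ j := Fin.succAbove_ne j k
      rw [Matrix.submatrix_apply]
      simp [hB', hC, h1, Fin.val_succ]
    rw [hEq, det_mul_row]
  -- Step D : factor β's out of the cofactor submatrix
  have hcof : cof A 0 j = (-1 : ℝ) ^ (j : ℕ) *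
      ((∏ i : Fin n, β ((i : ℕ) + 1)) * C.det) := by
    unfold cof
    rw [Fin.succAbove_zero]
    have hEq : A.submatrix Fin.succ j.succAbove =
        Matrix.of (fun (i k : Fin n) => β ((i : ℕ) + 1) * C i k) := by
      ext i k
      rw [Matrix.submatrix_apply, hA]
      simp [hC, Fin.val_succ, div_eq_mul_inv]
    rw [hEq, det_mul_column]
    simp
  -- product identities
  have hβprod : (∏ k ∈ Finset.Icc 1 n, β k) = ∏ i : Fin n, β ((i : ℕ) + 1) := by
    rw [← Finset.Ico_add_one_right_eq_Icc, Finset.prod_Ico_eq_prod_range,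
      Fin.prod_univ_eq_prod_range (fun i => β (i + 1)) n]
    simp [add_comm]
  have hrprod : (∏ k ∈ Finset.range (n + 1), r k) =
      r (j : ℕ) * ∏ k : Fin n, r ((j.succAbove k : ℕ)) := by
    rw [← Fin.prod_univ_eq_prod_range (fun k => r k) (n + 1)]
    exact Fin.prod_univ_succAbove (fun k : Fin (n + 1) => r (k : ℕ)) j
  have hβne : (∏ i : Fin n, β ((i : ℕ) + 1)) ≠ 0 :=
    Finset.prod_ne_zero_iff.mpr fun i _ =>
      (hβpos ((i : ℕ) + 1) (by omega) (by omega)).ne'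
  have hrj : r (j : ℕ) ≠ 0 := (hrpos (j : ℕ) hjn).ne'
  have key : (∏ k : Fin n, r ((j.succAbove k : ℕ))) =
      (R / r (j : ℕ)) * ∏ i : Fin n, β ((i : ℕ) + 1) := by
    rw [hR, hβprod, hrprod]
    field_simp
  rw [hdetBB', hdetB', hsubB', hcof, key]
  ring
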